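/- For the TRIP-Stern sequence for (e,23,23), the level sums satisfy the recurrence S(n) = S(n−1) + 4·S(n−2) for all n ≥ 2, with initial values S(0) = 3 and S(1) = 8. -/
import Mathlib


/-- `f₀(a,b,c) = (b,a+c,c)` for the triplet `(e,23,23)`. -/
def f0 (p : ℤ × ℤ × ℤ) : ℤ × ℤ × ℤ := (p.2.1, p.1 + p.2.2, p.2.2)

/-- `f₁(a,b,c) = (a,a+c,b)` for the triplet `(e,23,23)`. -/
def f1 (p : ℤ × ℤ × ℤ) : ℤ × ℤ × ℤ := (p.1, p.1 + p.2.2, p.2.1)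

/-- One step of the TRIP-Stern tree: apply `f₁` on a `true` and `f₀` on a `false`. -/
def step (p : ℤ × ℤ × ℤ) (i : Bool) : ℤ × ℤ × ℤ := if i then f1 p else f0 p

/-- `Δ(v) = f_{iₙ}(⋯ f_{i₁}(1,1,1) ⋯)`, applying `f_{i₁}` first. -/
def delta (v : List Bool) : ℤ × ℤ × ℤ := v.foldl step (1, 1, 1)

/-- `S n` is the sum of all three coordinates of all `2ⁿ` level-`n` triples. -/
def S (n : ℕ) : ℤ :=
  ∑ v : Fin n → Bool,
    ((delta (List.ofFn v)).1 + (delta (List.ofFn v)).2.1 + (delta (List.ofFn v)).2.2)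

/-- Sum of the middle coordinates at level `n`. -/
def B (n : ℕ) : ℤ := ∑ v : Fin n → Bool, (delta (List.ofFn v)).2.1

def snocEquiv (n : ℕ) : (Fin n → Bool) × Bool ≃ (Fin (n+1) → Bool) where
  toFun p := Fin.snoc p.1 p.2
  invFun v := (Fin.init v, v (Fin.last n))
  left_inv p := by simp
  right_inv v := by simp [Fin.snoc_init_self]

lemma sum_succ (g : ℤ × ℤ × ℤ → ℤ) (n : ℕ) :
    ∑ v : Fin (n+1) → Bool, g (delta (List.ofFn v))
      = ∑ v : Fin n → Bool,
          (g (f0 (delta (List.ofFn v))) + g (f1 (delta (List.ofFn v)))) := by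
  rw [← (snocEquiv n).sum_comp (fun v => g (delta (List.ofFn v)))]
  rw [Fintype.sum_prod_type]
  refine Finset.sum_congr rfl fun v _ => ?_
  have h : ∀ b : Bool, List.ofFn (Fin.snoc v b : Fin (n+1) → Bool)
      = (List.ofFn v) ++ [b] := by
    intro b
    rw [List.ofFn_succ']
    simp [Fin.snoc, Fin.init]
  rw [Fintype.sum_bool]
  simp only [snocEquiv, Equiv.coe_fn_mk, h, delta, List.foldl_append]
  simp [step]
  ring

lemma S_succ (n : ℕ) : S (n+1) = 3 * S n - B n := by
  have := sum_succ (fun p => p.1 + p.2.1 + p.2.2) n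
  simp only [S, B, this, f0, f1]
  rw [Finset.mul_sum, ← Finset.sum_sub_distrib]
  refine Finset.sum_congr rfl fun v _ => by ring

lemma B_succ (n : ℕ) : B (n+1) = 2 * S n - 2 * B n := by
  have := sum_succ (fun p => p.2.1) n
  simp only [S, B, this, f0, f1]
  rw [Finset.mul_sum, Finset.mul_sum, ← Finset.sum_sub_distrib]
  refine Finset.sum_congr rfl fun v _ => by ring

/-- For the TRIP-Stern sequence for `(e,23,23)`, the level sums satisfy
`S(n) = S(n−1) + 4·S(n−2)` for all `n ≥ 2`, with `S(0) = 3` and `S(1) = 8`. -/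
theorem levelSum_recurrence_e2323 :
    S 0 = 3 ∧ S 1 = 8 ∧
    (∀ n : ℕ, 2 ≤ n → S n = S (n - 1) + 4 * S (n - 2)) := by
  refine ⟨by simp [S, delta], ?_, ?_⟩
  · rw [show (1:ℕ) = 0 + 1 from rfl, S_succ]
    simp [S, B, delta]
  · intro n hn
    obtain ⟨m, rfl⟩ := Nat.exists_eq_add_of_le hn
    have key : S (m + 2) = S (m + 1) + 4 * S m := by
      have h1 := S_succ (m+1)
      have h2 := S_succ m
      have h3 := B_succ m
      have : (m + 1 + 1) = m + 2 := rfl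
      rw [this] at h1
      rw [h3] at h1
      linarith
    simpa [Nat.add_sub_cancel, show 2 + m - 1 = m + 1 by omega,
      show 2 + m - 2 = m by omega, Nat.add_comm] using key
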